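/- Let A, B be bounded operators on a Banach space such that ‖e^{tB}‖ ≤ 1 for all t ≥ 0 (B generates a contraction semigroup; in the bounded case, take ‖e^{tB}‖ ≤ 1). Then for all α ≥ 0, ‖e^{αA} - e^{αB}‖ ≤ e^{α‖A - B‖} - 1. -/

import Mathlib

open NormedSpace

private lemma expDeriv {X : Type*} [NormedAddCommGroup X] [NormedSpace ℂ X] [CompleteSpace X]
    (A : X →L[ℂ] X) (t : ℝ) :
    HasDerivAt (fun s : ℝ => exp ((s:ℂ) • A)) (exp ((t:ℂ) • A) * A) t := by
  have h : ∀ s : ℝ, (s:ℂ) • A = s • A := fun s => by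
    rw [← algebraMap_smul ℂ s A]; norm_num
  simp only [h]
  exact hasDerivAt_exp_smul_const A t

private lemma expDeriv' {X : Type*} [NormedAddCommGroup X] [NormedSpace ℂ X] [CompleteSpace X]
    (A : X →L[ℂ] X) (t : ℝ) :
    HasDerivAt (fun s : ℝ => exp ((s:ℂ) • A)) (A * exp ((t:ℂ) • A)) t := by
  have h : ∀ s : ℝ, (s:ℂ) • A = s • A := fun s => by
    rw [← algebraMap_smul ℂ s A]; norm_num
  simp only [h]
  exact hasDerivAt_exp_smul_const' A t

private lemma expCont {X : Type*} [NormedAddCommGroup X] [NormedSpace ℂ X] [CompleteSpace X]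
    (A : X →L[ℂ] X) : Continuous (fun s : ℝ => exp ((s:ℂ) • A)) :=
  continuous_iff_continuousAt.2 fun t => (expDeriv A t).continuousAt

theorem stmt7 {X : Type*} [NormedAddCommGroup X] [NormedSpace ℂ X] [CompleteSpace X]
    (A B : X →L[ℂ] X)
    (hB : ∀ t : ℝ, 0 ≤ t → ‖exp ((t : ℂ) • B)‖ ≤ 1) :
    ∀ α : ℝ, 0 ≤ α →
      ‖exp ((α : ℂ) • A) - exp ((α : ℂ) • B)‖ ≤ Real.exp (α * ‖A - B‖) - 1 := by
  set K : ℝ := ‖A - B‖ with hK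
  have hK0 : 0 ≤ K := norm_nonneg _
  set f : ℝ → ℝ := fun s => ‖exp ((s:ℂ) • A) - exp ((s:ℂ) • B)‖ with hf
  have hfc : Continuous f := ((expCont A).sub (expCont B)).norm
  have hf0 : ∀ s, 0 ≤ f s := fun s => norm_nonneg _
  -- pointwise bound on the integrand norm
  have hEA : ∀ s : ℝ, 0 ≤ s → ‖exp ((s:ℂ) • A)‖ ≤ 1 + f s := by
    intro s hs
    calc ‖exp ((s:ℂ) • A)‖
        ≤ ‖exp ((s:ℂ) • A) - exp ((s:ℂ) • B)‖ + ‖exp ((s:ℂ) • B)‖ := by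
          simpa using norm_add_le (exp ((s:ℂ) • A) - exp ((s:ℂ) • B)) (exp ((s:ℂ) • B))
      _ ≤ f s + 1 := by exact add_le_add le_rfl (hB s hs)
      _ = 1 + f s := by ring
  -- the key integral inequality
  have key : ∀ α : ℝ, 0 ≤ α → f α ≤ ∫ s in (0:ℝ)..α, K * (1 + f s) := by
    intro α hα
    set g : ℝ → (X →L[ℂ] X) :=
      fun s => exp ((s:ℂ) • A) * ((A - B) * exp ((((α - s : ℝ)):ℂ) • B)) with hg
    have hgc : Continuous g := by
      apply (expCont A).mul (continuous_const.mul ?_)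
      exact (expCont B).comp (continuous_const.sub continuous_id)
    have hderiv : ∀ s ∈ Set.uIcc (0:ℝ) α,
        HasDerivAt (fun s : ℝ => exp ((s:ℂ) • A) * exp ((((α - s : ℝ)):ℂ) • B)) (g s) s := by
      intro s _
      have h1 := expDeriv A s
      have h2 : HasDerivAt (fun s : ℝ => exp ((((α - s : ℝ)):ℂ) • B))
          (-(B * exp ((((α - s : ℝ)):ℂ) • B))) s := by
        have h3 : HasDerivAt (fun x : ℝ => α - x) (-1) s := by
          simpa using (hasDerivAt_id' s).const_sub α
        have h5 := (expDeriv' B (α - s)).scomp s h3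
        have h6 : ((-1:ℝ) • (B * exp ((((α - s : ℝ)):ℂ) • B)))
            = -(B * exp ((((α - s : ℝ)):ℂ) • B)) := by
          simp
        rw [← h6]
        exact h5
      have := h1.mul h2
      refine this.congr_deriv ?_
      simp only [hg]
      noncomm_ring
    have hftc : (∫ s in (0:ℝ)..α, g s)
        = exp ((α:ℂ) • A) - exp ((α:ℂ) • B) := by
      rw [intervalIntegral.integral_eq_sub_of_hasDerivAt hderiv (hgc.intervalIntegrable 0 α)]
      simp [exp_zero]
    have hbound : ∀ s ∈ Set.Icc (0:ℝ) α, ‖g s‖ ≤ K * (1 + f s) := by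
      intro s hs
      calc ‖g s‖ ≤ ‖exp ((s:ℂ) • A)‖ * (‖A - B‖ * ‖exp ((((α - s : ℝ)):ℂ) • B)‖) :=
            (norm_mul_le _ _).trans (by gcongr; exact norm_mul_le _ _)
        _ ≤ (1 + f s) * (K * 1) := by
            have b1 := hEA s hs.1
            have b2 := hB (α - s) (by linarith [hs.2])
            have h4 : ‖A - B‖ * ‖exp ((((α - s : ℝ)):ℂ) • B)‖ ≤ K * 1 :=
              mul_le_mul le_rfl b2 (norm_nonneg _) hK0
            exact mul_le_mul b1 h4 (by positivity) (by linarith [hf0 s])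
        _ = K * (1 + f s) := by ring
    calc f α = ‖∫ s in (0:ℝ)..α, g s‖ := by rw [hftc]
      _ ≤ ∫ s in (0:ℝ)..α, ‖g s‖ := intervalIntegral.norm_integral_le_integral_norm hα
      _ ≤ ∫ s in (0:ℝ)..α, K * (1 + f s) := by
          exact intervalIntegral.integral_mono_on hα (hgc.norm.intervalIntegrable 0 α)
            (((continuous_const.mul (continuous_const.add hfc)).intervalIntegrable 0 α)) hbound
  -- Gronwall
  intro α hα
  rcases eq_or_lt_of_le hK0 with hKz | hKpos
  · have hAB : A = B := by
      have h5 : A - B = 0 := norm_eq_zero.mp (by rw [← hK, ← hKz])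
      exact sub_eq_zero.mp h5
    subst hAB
    simp only [sub_self, norm_zero]
    have h6 : Real.exp (α * ‖(A : X →L[ℂ] X) - A‖) = 1 := by
      rw [sub_self, norm_zero, mul_zero, Real.exp_zero]
    rw [h6]
    norm_num
  set φ : ℝ → ℝ := fun α => ∫ s in (0:ℝ)..α, K * (1 + f s) with hφ
  have hw : Continuous (fun s => K * (1 + f s)) := by fun_prop
  have hφd : ∀ t : ℝ, HasDerivAt φ (K * (1 + f t)) t := by
    intro t
    exact intervalIntegral.integral_hasDerivAt_right (hw.intervalIntegrable 0 t)
      hw.aestronglyMeasurable.stronglyMeasurableAtFilter hw.continuousAt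
  have hφ0 : φ 0 = 0 := by simp [hφ]
  have hφnn : ∀ t, 0 ≤ t → 0 ≤ φ t := fun t ht =>
    intervalIntegral.integral_nonneg ht (fun s _ => mul_nonneg hK0 (by linarith [hf0 s]))
  have hgron := norm_le_gronwallBound_of_norm_deriv_right_le (f := φ)
    (f' := fun t => K * (1 + f t)) (δ := 0) (K := K) (ε := K) (a := 0) (b := α)
    (fun t _ => (hφd t).continuousAt.continuousWithinAt)
    (fun t _ => (hφd t).hasDerivWithinAt)
    (by simp [hφ0])
    (fun t ht => by
      have h1 : f t ≤ φ t := key t ht.1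
      show ‖K * (1 + f t)‖ ≤ K * ‖φ t‖ + K
      rw [Real.norm_of_nonneg (mul_nonneg hK0 (by linarith [hf0 t])),
        Real.norm_of_nonneg (hφnn t ht.1)]
      nlinarith [hf0 t])
  have hb := hgron α ⟨hα, le_rfl⟩
  rw [gronwallBound_of_K_ne_0 (ne_of_gt hKpos)] at hb
  simp only [zero_mul, zero_add, sub_zero, div_self (ne_of_gt hKpos), one_mul] at hb
  calc f α ≤ φ α := key α hα
    _ ≤ ‖φ α‖ := le_abs_self _
    _ ≤ Real.exp (K * α) - 1 := hb
    _ = Real.exp (α * K) - 1 := by rw [mul_comm]
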